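/- Let n ≥ 1, let R be a finite commutative symmetric ℤ/n-algebra, and let S ⊆ R \ {0} be a subset with S = -S. Then the Cayley graph Γ(R,S) is integral (all eigenvalues of its adjacency matrix are integers) if and only if S is stable under the action of the unit group (ℤ/n)ˣ, i.e., u•s ∈ S for every u ∈ (ℤ/n)ˣ and every s ∈ S. -/

import Mathlib

set_option linter.unusedSectionVars false
set_option maxHeartbeats 1000000

/-- A commutative `ZMod n`-algebra is *symmetric* if it admits an additive group
homomorphism `ψ : R →+ ZMod n` whose kernel contains no nonzero ideal of `R`. -/
def IsSymmetricZModAlgebra (n : ℕ) (R : Type*) [CommRing R] [Algebra (ZMod n) R] : Prop :=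
  ∃ ψ : R →+ ZMod n, ∀ I : Ideal R, (∀ x ∈ I, ψ x = 0) → I = ⊥

/-- Adjacency matrix (over ℂ) of the Cayley graph Γ(R,S):
`a` and `b` are adjacent iff `b - a ∈ S`. -/
noncomputable def cayleyAdj {R : Type*} [Ring R] (S : Set R) : Matrix R R ℂ :=
  fun a b => S.indicator (fun _ => (1 : ℂ)) (b - a)

/-- The Cayley graph Γ(R,S) is integral: every eigenvalue of its adjacency matrix
is a (rational) integer. -/
def IsIntegralCayley {R : Type*} [Ring R] [Fintype R] (S : Set R) : Prop :=
  letI := Classical.decEq R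
  spectrum ℂ (cayleyAdj S) ⊆ Set.range ((↑) : ℤ → ℂ)

open Finset Matrix Polynomial

section Aux

variable {n : ℕ} [NeZero n]

private lemma pow_val_add {M : Type*} [Monoid M] {ζ : M} (hζ : ζ ^ n = 1) (a b : ZMod n) :
    ζ ^ (a + b).val = ζ ^ a.val * ζ ^ b.val := by
  rw [ZMod.val_add, ← pow_eq_pow_mod _ hζ, pow_add]

private lemma pow_val_mul {M : Type*} [Monoid M] {ζ : M} (hζ : ζ ^ n = 1) (a b : ZMod n) :
    ζ ^ (a * b).val = (ζ ^ a.val) ^ b.val := by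
  rw [ZMod.val_mul, ← pow_eq_pow_mod _ hζ, pow_mul]

private lemma pow_val_eq_one_iff {M : Type*} [CommMonoid M] {ζ : M} (hζ : IsPrimitiveRoot ζ n)
    (a : ZMod n) : ζ ^ a.val = 1 ↔ a = 0 := by
  rw [hζ.pow_eq_one_iff_dvd, ← ZMod.val_eq_zero]
  exact ⟨fun h => Nat.eq_zero_of_dvd_of_lt h (ZMod.val_lt a), fun h => h ▸ dvd_zero n⟩

variable {R : Type*} [CommRing R] [Fintype R] [Algebra (ZMod n) R]

private lemma psi_smul (ψ : R →+ ZMod n) (c : ZMod n) (x : R) : ψ (c • x) = c * ψ x := by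
  have h1 : c • x = c.val • x := by
    rw [← Nat.cast_smul_eq_nsmul (ZMod n) c.val x, ZMod.natCast_rightInverse c]
  rw [h1, map_nsmul, nsmul_eq_mul, ZMod.natCast_rightInverse c]

private lemma exists_psi_ne {ψ : R →+ ZMod n} (hψ : ∀ I : Ideal R, (∀ x ∈ I, ψ x = 0) → I = ⊥)
    {t : R} (ht : t ≠ 0) : ∃ x : R, ψ (t * x) ≠ 0 := by
  by_contra h
  push_neg at h
  apply ht
  have hsp : Ideal.span {t} = ⊥ := by
    apply hψ
    intro x hx
    rw [Ideal.mem_span_singleton] at hx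
    obtain ⟨c, rfl⟩ := hx
    exact h c
  rwa [Ideal.span_singleton_eq_bot] at hsp

private lemma sum_char_eq_zero {F : Type*} [Field F] {ζ : F} (hζ : IsPrimitiveRoot ζ n)
    {ψ : R →+ ZMod n} (hψ : ∀ I : Ideal R, (∀ x ∈ I, ψ x = 0) → I = ⊥)
    {t : R} (ht : t ≠ 0) :
    ∑ x : R, ζ ^ (ψ (t * x)).val = 0 := by
  obtain ⟨x₀, h0⟩ := exists_psi_ne hψ ht
  have hne : ζ ^ (ψ (t * x₀)).val ≠ 1 := fun h => h0 ((pow_val_eq_one_iff hζ _).mp h)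
  have key : ζ ^ (ψ (t * x₀)).val * ∑ x : R, ζ ^ (ψ (t * x)).val
      = ∑ x : R, ζ ^ (ψ (t * x)).val := by
    rw [Finset.mul_sum]
    refine Fintype.sum_equiv (Equiv.addLeft x₀) _ _ fun x => ?_
    rw [← pow_val_add hζ.pow_eq_one, ← map_add, ← mul_add]
    rfl
  have h2 : (ζ ^ (ψ (t * x₀)).val - 1) * ∑ x : R, ζ ^ (ψ (t * x)).val = 0 := by
    rw [sub_mul, one_mul, key, sub_self]
  rcases mul_eq_zero.mp h2 with h | h
  · exact absurd (sub_eq_zero.mp h) hne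
  · exact h

variable [DecidableEq R]

private lemma charMat_mul {ζ : ℂ} (hζ : IsPrimitiveRoot ζ n)
    {ψ : R →+ ZMod n} (hψ : ∀ I : Ideal R, (∀ x ∈ I, ψ x = 0) → I = ⊥) :
    (Matrix.of fun r x : R => ζ ^ (ψ (r * x)).val)
      * (Matrix.of fun x r : R => ζ ^ (ψ (r * (-x))).val)
    = (Fintype.card R : ℂ) • (1 : Matrix R R ℂ) := by
  ext r r'
  simp only [Matrix.mul_apply, Matrix.of_apply, Matrix.smul_apply, Matrix.one_apply]
  have hterm : ∀ x : R, ζ ^ (ψ (r * x)).val * ζ ^ (ψ (r' * (-x))).val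
      = ζ ^ (ψ ((r - r') * x)).val := by
    intro x
    rw [← pow_val_add hζ.pow_eq_one, ← map_add]
    congr 2
    ring
  rw [Finset.sum_congr rfl fun x _ => hterm x]
  by_cases h : r = r'
  · subst h
    simp [sub_self, Finset.card_univ]
  · rw [sum_char_eq_zero hζ hψ (sub_ne_zero.mpr h)]
    simp [h]

private lemma charMat_mul' {ζ : ℂ} (hζ : IsPrimitiveRoot ζ n)
    {ψ : R →+ ZMod n} (hψ : ∀ I : Ideal R, (∀ x ∈ I, ψ x = 0) → I = ⊥) :
    (Matrix.of fun x r : R => ζ ^ (ψ (r * (-x))).val)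
      * (Matrix.of fun r x : R => ζ ^ (ψ (r * x)).val)
    = (Fintype.card R : ℂ) • (1 : Matrix R R ℂ) := by
  ext x y
  simp only [Matrix.mul_apply, Matrix.of_apply, Matrix.smul_apply, Matrix.one_apply]
  have hterm : ∀ r : R, ζ ^ (ψ (r * (-x))).val * ζ ^ (ψ (r * y)).val
      = ζ ^ (ψ ((y - x) * r)).val := by
    intro r
    rw [← pow_val_add hζ.pow_eq_one, ← map_add]
    congr 2
    ring
  rw [Finset.sum_congr rfl fun r _ => hterm r]
  by_cases h : x = y
  · subst h
    simp [sub_self, Finset.card_univ]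
  · rw [sum_char_eq_zero hζ hψ (sub_ne_zero.mpr (fun he => h he.symm))]
    simp [h]

private lemma sum_indicator_mul {F : Type*} [NonAssocSemiring F] (S : Set R)
    [DecidablePred (· ∈ S)] (h : R → F) :
    ∑ x : R, S.indicator (fun _ => (1 : F)) x * h x = ∑ x ∈ S.toFinset, h x := by
  rw [← Finset.sum_subset (Finset.subset_univ S.toFinset)]
  · exact Finset.sum_congr rfl fun x hx => by
      rw [Set.indicator_of_mem (Set.mem_toFinset.mp hx), one_mul]
  · intro x _ hx
    rw [Set.indicator_of_notMem (fun h' => hx (Set.mem_toFinset.mpr h')), zero_mul]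

private lemma spectrum_cayley {ζ : ℂ} (hζ : IsPrimitiveRoot ζ n)
    {ψ : R →+ ZMod n} (hψ : ∀ I : Ideal R, (∀ x ∈ I, ψ x = 0) → I = ⊥)
    (S : Set R) [DecidablePred (· ∈ S)] :
    spectrum ℂ (cayleyAdj S)
      = Set.range (fun r : R => ∑ s ∈ S.toFinset, ζ ^ (ψ (r * s)).val) := by
  set lam : R → ℂ := fun r => ∑ s ∈ S.toFinset, ζ ^ (ψ (r * s)).val with hlam
  set c : ℂ := (Fintype.card R : ℂ) with hc
  have hc0 : c ≠ 0 := Nat.cast_ne_zero.mpr Fintype.card_ne_zero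
  set M : Matrix R R ℂ := Matrix.of fun r x : R => ζ ^ (ψ (r * x)).val with hM
  set N : Matrix R R ℂ := Matrix.of fun x r : R => ζ ^ (ψ (r * (-x))).val with hN
  have h1 : Mᵀ * (c⁻¹ • Nᵀ) = 1 := by
    rw [Matrix.mul_smul, ← Matrix.transpose_mul, charMat_mul' hζ hψ, Matrix.transpose_smul,
      Matrix.transpose_one, smul_smul, inv_mul_cancel₀ hc0, one_smul]
  have h2 : (c⁻¹ • Nᵀ) * Mᵀ = 1 := by
    rw [Matrix.smul_mul, ← Matrix.transpose_mul, charMat_mul hζ hψ, Matrix.transpose_smul,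
      Matrix.transpose_one, smul_smul, inv_mul_cancel₀ hc0, one_smul]
  set V : (Matrix R R ℂ)ˣ := ⟨Mᵀ, c⁻¹ • Nᵀ, h1, h2⟩ with hV
  set D : Matrix R R ℂ := Matrix.diagonal lam with hD
  have hAP : cayleyAdj S * Mᵀ = Mᵀ * D := by
    ext a r
    rw [Matrix.mul_apply, Matrix.mul_diagonal]
    have step1 : ∑ b : R, cayleyAdj S a b * Mᵀ b r
        = ∑ s : R, S.indicator (fun _ => (1:ℂ)) s
            * (ζ ^ (ψ (r * a)).val * ζ ^ (ψ (r * s)).val) := by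
      refine (Fintype.sum_equiv (Equiv.addLeft a) _ _ fun s => ?_).symm
      show S.indicator _ s * _ = cayleyAdj S a (a + s) * Mᵀ (a + s) r
      rw [cayleyAdj]
      show _ = S.indicator _ ((a + s) - a) * ζ ^ (ψ (r * (a + s))).val
      rw [add_sub_cancel_left, mul_add, map_add, pow_val_add hζ.pow_eq_one]
    rw [step1]
    have step2 : ∀ s : R, S.indicator (fun _ => (1:ℂ)) s
        * (ζ ^ (ψ (r * a)).val * ζ ^ (ψ (r * s)).val)
        = ζ ^ (ψ (r * a)).val * (S.indicator (fun _ => (1:ℂ)) s * ζ ^ (ψ (r * s)).val) := by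
      intro s; ring
    rw [Finset.sum_congr rfl fun s _ => step2 s, ← Finset.mul_sum, sum_indicator_mul]
    rfl
  have hA : cayleyAdj S = (V : Matrix R R ℂ) * D * ((V⁻¹ : (Matrix R R ℂ)ˣ) : Matrix R R ℂ) := by
    show cayleyAdj S = Mᵀ * D * (c⁻¹ • Nᵀ)
    calc cayleyAdj S = cayleyAdj S * (Mᵀ * (c⁻¹ • Nᵀ)) := by rw [h1, mul_one]
    _ = (cayleyAdj S * Mᵀ) * (c⁻¹ • Nᵀ) := by rw [mul_assoc]
    _ = Mᵀ * D * (c⁻¹ • Nᵀ) := by rw [hAP]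
  rw [hA, spectrum.units_conjugate, hD, _root_.spectrum_diagonal]

end Aux

/-- Let `R` be a finite commutative symmetric `ZMod n`-algebra and `S ⊆ R \ {0}` with
`S = -S`. Then `Γ(R,S)` is integral iff `S` is stable under the action of `(ZMod n)ˣ`. -/
theorem integral_iff_stable (n : ℕ) (hn : 1 ≤ n) (R : Type*) [CommRing R] [Fintype R]
    [Algebra (ZMod n) R] (hsym : IsSymmetricZModAlgebra n R)
    (S : Set R) (hS0 : S ⊆ {x : R | x ≠ 0}) (hSneg : S = -S) :
    IsIntegralCayley S ↔ ∀ (u : (ZMod n)ˣ), ∀ s ∈ S, ((u : ZMod n) • s) ∈ S := by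
  haveI : NeZero n := ⟨by omega⟩
  letI : DecidableEq R := Classical.decEq R
  letI : DecidablePred (· ∈ S) := Classical.decPred _
  obtain ⟨ψ, hψ⟩ := hsym
  obtain ⟨ζ, hζ⟩ : ∃ ζ : ℂ, IsPrimitiveRoot ζ n :=
    ⟨_, Complex.isPrimitiveRoot_exp n (by omega)⟩
  set T := S.toFinset with hT
  set lam : R → ℂ := fun r => ∑ s ∈ T, ζ ^ (ψ (r * s)).val with hlam
  have hspec : spectrum ℂ (cayleyAdj S) = Set.range lam := spectrum_cayley hζ hψ S
  have hmain : IsIntegralCayley S ↔ ∀ r : R, ∃ m : ℤ, (m : ℂ) = lam r := by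
    show spectrum ℂ (cayleyAdj S) ⊆ Set.range ((↑) : ℤ → ℂ) ↔ _
    rw [hspec]
    constructor
    · intro h r
      exact h (Set.mem_range_self r)
    · rintro h μ ⟨r, rfl⟩
      exact h r
  rw [hmain]
  -- cyclotomic field setup
  set N : ℕ+ := ⟨n, hn⟩ with hN
  set K := CyclotomicField N ℚ with hK
  have hirr : Irreducible (Polynomial.cyclotomic (N : ℕ) ℚ) :=
    Polynomial.cyclotomic.irreducible_rat N.pos
  haveI : IsCyclotomicExtension {(N : ℕ)} ℚ K := CyclotomicField.isCyclotomicExtension _ _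
  set ζK := IsCyclotomicExtension.zeta N ℚ K with hzK
  have hζK : IsPrimitiveRoot ζK (N : ℕ) := IsCyclotomicExtension.zeta_spec N ℚ K
  have hζK' : IsPrimitiveRoot ζK n := hζK
  set φ : K →ₐ[ℚ] ℂ := (hζK.embeddingsEquivPrimitiveRoots ℂ hirr).symm
    ⟨ζ, (mem_primitiveRoots N.pos).2 hζ⟩ with hphi
  have hφζ : φ ζK = ζ := by
    have h := hζK.embeddingsEquivPrimitiveRoots_apply_coe (n := N) ℂ hirr φ
    rw [hphi] at h ⊢
    rw [Equiv.apply_symm_apply] at h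
    exact h.symm
  haveI : IsGalois ℚ K := IsCyclotomicExtension.isGalois {(N : ℕ)} ℚ K
  haveI : FiniteDimensional ℚ K := IsCyclotomicExtension.finiteDimensional {(N : ℕ)} ℚ K
  have hfixQ : ∀ x : K, (∀ σ : K ≃ₐ[ℚ] K, σ x = x) → ∃ q : ℚ, algebraMap ℚ K q = x := by
    intro x hx
    have hmem : x ∈ IntermediateField.fixedField (⊤ : Subgroup (K ≃ₐ[ℚ] K)) := fun σ => hx σ
    rw [← IntermediateField.fixingSubgroup_bot,
      IsGalois.fixedField_fixingSubgroup (⊥ : IntermediateField ℚ K)] at hmem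
    rwa [IntermediateField.mem_bot, Set.mem_range] at hmem
  have hint : IsIntegral ℤ ζK := hζK'.isIntegral (by omega)
  set lamK : R → K := fun r => ∑ s ∈ T, ζK ^ (ψ (r * s)).val with hlamK
  have hφlam : ∀ r, φ (lamK r) = lam r := by
    intro r
    rw [hlamK, hlam, map_sum]
    exact Finset.sum_congr rfl fun s _ => by rw [map_pow, hφζ]
  -- action of Galois on lamK
  have hsig : ∀ (σ : K ≃ₐ[ℚ] K) (u : (ZMod n)ˣ), hζK.autToPow ℚ σ = u → ∀ r : R,
      σ (lamK r) = ∑ s ∈ T, ζK ^ (ψ (r * ((u : ZMod n) • s))).val := by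
    intro σ u hu r
    rw [hlamK, map_sum]
    refine Finset.sum_congr rfl fun s _ => ?_
    rw [map_pow, ← hζK.autToPow_spec ℚ σ, hu]
    rw [mul_smul_comm, psi_smul, pow_val_mul hζK'.pow_eq_one]
    rfl
  -- injectivity of the unit action
  have hinj : ∀ u : (ZMod n)ˣ, Function.Injective (fun s : R => ((u : ZMod n)) • s) := by
    intro u a b h
    have h2 := congrArg (fun y => ((u⁻¹ : (ZMod n)ˣ) : ZMod n) • y) h
    simpa [smul_smul, ← Units.val_mul] using h2
  constructor
  · -- integral → stable
    intro hintt u s hs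
    have hsurj : ∃ σ : K ≃ₐ[ℚ] K, hζK.autToPow ℚ σ = u := by
      refine ⟨(IsCyclotomicExtension.autEquivPow K hirr).symm u, ?_⟩
      have := (IsCyclotomicExtension.autEquivPow K hirr).apply_symm_apply u
      rwa [IsCyclotomicExtension.autEquivPow_apply] at this
    obtain ⟨σ, hσu⟩ := hsurj
    have hfix2 : ∀ r, σ (lamK r) = lamK r := by
      intro r
      obtain ⟨m, hm⟩ := hintt r
      have hlamKr : lamK r = algebraMap ℚ K ((m : ℚ)) := by
        apply RingHom.injective (φ : K →+* ℂ)
        show φ (lamK r) = φ ((algebraMap ℚ K) ((m : ℚ)))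
        rw [hφlam r, ← hm, AlgHom.commutes]
        push_cast
        rfl
      rw [hlamKr, AlgEquiv.commutes]
    have key : ∀ r : R, ∑ s' ∈ T, ζK ^ (ψ (r * ((u : ZMod n) • s'))).val = lamK r := by
      intro r
      have h := hsig σ u hσu r
      rw [← h, hfix2 r]
    have keyC : ∀ r : R,
        ∑ s' ∈ T, ζ ^ (ψ (r * ((u : ZMod n) • s'))).val = lam r := by
      intro r
      have h := congrArg φ (key r)
      rw [hφlam r, map_sum] at h
      rw [← h]
      exact (Finset.sum_congr rfl fun s' _ => by rw [map_pow, hφζ]).symm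
    -- Fourier inversion
    set c : ℂ := (Fintype.card R : ℂ) with hc
    have hc0 : c ≠ 0 := Nat.cast_ne_zero.mpr Fintype.card_ne_zero
    set M : Matrix R R ℂ := Matrix.of fun r x : R => ζ ^ (ψ (r * x)).val with hM
    set T' := T.image (fun s => (u : ZMod n) • s) with hT'
    set w : R → ℂ := fun x => if x ∈ T then 1 else 0 with hw
    set w' : R → ℂ := fun x => if x ∈ T' then 1 else 0 with hw'
    have esum : ∀ (t : Finset R) (r : R),
        ∑ x : R, M r x * (if x ∈ t then (1:ℂ) else 0) = ∑ x ∈ t, M r x := by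
      intro t r
      simp only [mul_ite, mul_one, mul_zero]
      rw [Finset.sum_ite_mem, Finset.univ_inter]
    have hmv : M.mulVec w' = M.mulVec w := by
      ext r
      show ∑ x : R, M r x * w' x = ∑ x : R, M r x * w x
      rw [hw, hw', esum, esum, hT', Finset.sum_image (fun a _ b _ h => hinj u h)]
      exact (keyC r)
    have hNM : (Matrix.of fun x r : R => ζ ^ (ψ (r * (-x))).val) * M = c • 1 :=
      charMat_mul' hζ hψ
    have hww : w' = w := by
      have h := congrArg (fun v => (Matrix.of fun x r : R => ζ ^ (ψ (r * (-x))).val).mulVec v) hmv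
      simp only [Matrix.mulVec_mulVec] at h
      rw [hNM] at h
      simp only [Matrix.smul_mulVec, Matrix.one_mulVec] at h
      exact smul_right_injective (R → ℂ) hc0 h
    have h1 : w' ((u : ZMod n) • s) = 1 := by
      rw [hw']
      exact if_pos (Finset.mem_image_of_mem _ (Set.mem_toFinset.mpr hs))
    rw [hww] at h1
    have hmem : ((u : ZMod n) • s) ∈ T := by
      by_contra hc'
      have h1' : (if ((u : ZMod n) • s : R) ∈ T then (1:ℂ) else 0) = 1 := h1
      rw [if_neg hc'] at h1'
      exact zero_ne_one h1'
    exact Set.mem_toFinset.mp hmem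
  · -- stable → integral
    intro hstab r
    have himg : ∀ u : (ZMod n)ˣ, T.image (fun s => (u : ZMod n) • s) = T := by
      intro u
      apply Finset.Subset.antisymm
      · intro x hx
        rw [Finset.mem_image] at hx
        obtain ⟨s, hs, rfl⟩ := hx
        exact Set.mem_toFinset.mpr (hstab u s (Set.mem_toFinset.mp hs))
      · intro x hx
        refine Finset.mem_image.mpr ⟨((u⁻¹ : (ZMod n)ˣ) : ZMod n) • x,
          Set.mem_toFinset.mpr (hstab u⁻¹ x (Set.mem_toFinset.mp hx)), ?_⟩
        simp [smul_smul, ← Units.val_mul]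
    have hfixed : ∀ σ : K ≃ₐ[ℚ] K, σ (lamK r) = lamK r := by
      intro σ
      obtain ⟨u, hu⟩ : ∃ u : (ZMod n)ˣ, hζK.autToPow ℚ σ = u := ⟨hζK.autToPow ℚ σ, rfl⟩
      rw [hsig σ u hu r]
      calc ∑ s' ∈ T, ζK ^ (ψ (r * ((u : ZMod n) • s'))).val
          = ∑ x ∈ T.image (fun s => (u : ZMod n) • s), ζK ^ (ψ (r * x)).val :=
            (Finset.sum_image (f := fun x => ζK ^ (ψ (r * x)).val)
              (g := fun s : R => (u : ZMod n) • s) (fun a _ b _ h => hinj u h)).symm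
        _ = lamK r := by rw [himg u, hlamK]
    obtain ⟨q, hq⟩ := hfixQ (lamK r) hfixed
    have hki : IsIntegral ℤ (lamK r) := by
      rw [hlamK]
      exact IsIntegral.sum _ fun s _ => hint.pow _
    rw [← hq] at hki
    rw [isIntegral_algebraMap_iff (algebraMap ℚ K).injective] at hki
    obtain ⟨m, hm⟩ := IsIntegrallyClosed.isIntegral_iff.mp hki
    refine ⟨m, ?_⟩
    have h := congrArg φ hq
    rw [hφlam r, AlgHom.commutes] at h
    rw [← h, ← hm]
    push_cast
    rfl
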